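/- arXiv:1908.05528 — 8 statements merged into one kernel-verified Lean document; each statement's English description precedes it below -/
import Mathlib

section
/- Let (V, ⋆) be a K-algebra. The fusion ⊗ on subspaces (U ⊗ W := span{u ⋆ w | u ∈ U, w ∈ W}) is commutative, i.e., U ⊗ W = W ⊗ U for all subspaces U, W, if and only if V is pseudo-commutative: for all u, v ∈ V there exists α ∈ K with u ⋆ v = α • (v ⋆ u). -/
private lemma fusion_le_aux {K V : Type*} [Field K] [AddCommGroup V] [Module K V]
    (star : V →ₗ[K] V →ₗ[K] V)
    (h : ∀ u v : V, ∃ α : K, star u v = α • (star v u)) (U W : Submodule K V) :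
    Submodule.span K (Set.image2 (fun u w => star u w) (U : Set V) (W : Set V)) ≤
      Submodule.span K (Set.image2 (fun u w => star u w) (W : Set V) (U : Set V)) := by
  rw [Submodule.span_le]
  rintro _ ⟨u, hu, w, hw, rfl⟩
  obtain ⟨α, hα⟩ := h u w
  simp only [SetLike.mem_coe]
  rw [hα]
  exact Submodule.smul_mem _ _ (Submodule.subset_span ⟨w, hw, u, hu, rfl⟩)

/-- fusion is commutative iff the K-algebra is pseudo-commutative. -/
theorem fusion_comm_iff_pseudoComm {K V : Type*} [Field K] [AddCommGroup V] [Module K V]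
    (star : V →ₗ[K] V →ₗ[K] V) :
    (∀ U W : Submodule K V,
        Submodule.span K (Set.image2 (fun u w => star u w) (U : Set V) (W : Set V)) =
          Submodule.span K (Set.image2 (fun u w => star u w) (W : Set V) (U : Set V))) ↔
      (∀ u v : V, ∃ α : K, star u v = α • (star v u)) := by
  constructor
  · intro h u v
    have key := h (Submodule.span K {u}) (Submodule.span K {v})
    have huv : star u v ∈
        Submodule.span K (Set.image2 (fun u w => star u w)
          ((Submodule.span K {u} : Submodule K V) : Set V)
          ((Submodule.span K {v} : Submodule K V) : Set V)) :=
      Submodule.subset_span ⟨u, Submodule.mem_span_singleton_self u, v,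
        Submodule.mem_span_singleton_self v, rfl⟩
    rw [key] at huv
    have hle : Submodule.span K (Set.image2 (fun u w => star u w)
          ((Submodule.span K {v} : Submodule K V) : Set V)
          ((Submodule.span K {u} : Submodule K V) : Set V)) ≤
        Submodule.span K {star v u} := by
      rw [Submodule.span_le]
      rintro _ ⟨a, ha, b, hb, rfl⟩
      simp only [SetLike.mem_coe] at ha hb ⊢
      rw [Submodule.mem_span_singleton] at ha hb
      obtain ⟨c, rfl⟩ := ha
      obtain ⟨d, rfl⟩ := hb
      simp only [map_smul, LinearMap.smul_apply, smul_smul]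
      exact Submodule.smul_mem _ _ (Submodule.mem_span_singleton_self _)
    obtain ⟨α, hα⟩ := Submodule.mem_span_singleton.1 (hle huv)
    exact ⟨α, hα.symm⟩
  · intro h U W
    exact le_antisymm (fusion_le_aux star h U W) (fusion_le_aux star h W U)
end

section
/- Let (V, ⋆) be a K-algebra. The fusion ⊗ on subspaces is associative, i.e., (U ⊗ W) ⊗ Z = U ⊗ (W ⊗ Z) for all subspaces U, W, Z, if and only if V is pseudo-associative: for all u, v, w ∈ V there exist α, β ∈ K with (u ⋆ v) ⋆ w = α • (u ⋆ (v ⋆ w)) and u ⋆ (v ⋆ w) = β • ((u ⋆ v) ⋆ w). -/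
/-- fusion is associative iff the K-algebra is pseudo-associative. -/
theorem fusion_assoc_iff_pseudoAssoc {K V : Type*} [Field K] [AddCommGroup V] [Module K V]
    (star : V →ₗ[K] V →ₗ[K] V) :
    (∀ U W Z : Submodule K V,
        Submodule.span K (Set.image2 (fun u w => star u w)
          ((Submodule.span K (Set.image2 (fun u w => star u w) (U : Set V) (W : Set V))) : Set V)
          (Z : Set V)) =
        Submodule.span K (Set.image2 (fun u w => star u w) (U : Set V)
          ((Submodule.span K (Set.image2 (fun u w => star u w) (W : Set V) (Z : Set V))) : Set V))) ↔
      (∀ u v w : V,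
        (∃ α : K, star (star u v) w = α • (star u (star v w))) ∧
        (∃ β : K, star u (star v w) = β • (star (star u v) w))) := by
  have reform : ∀ U W Z : Submodule K V,
      (Submodule.span K (Set.image2 (fun u w => star u w)
          ((Submodule.span K (Set.image2 (fun u w => star u w) (U : Set V) (W : Set V))) : Set V)
          (Z : Set V)) =
        Submodule.span K (Set.image2 (fun u w => star u w) (U : Set V)
          ((Submodule.span K (Set.image2 (fun u w => star u w) (W : Set V) (Z : Set V))) : Set V)))
      ↔ Submodule.map₂ star (Submodule.map₂ star U W) Z
          = Submodule.map₂ star U (Submodule.map₂ star W Z) := by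
    intro U W Z
    rw [← Submodule.map₂_eq_span_image2, ← Submodule.map₂_eq_span_image2,
      ← Submodule.map₂_eq_span_image2, ← Submodule.map₂_eq_span_image2]
  simp only [reform]
  constructor
  · intro h u v w
    have h1 := h (Submodule.span K {u}) (Submodule.span K {v}) (Submodule.span K {w})
    rw [Submodule.map₂_span_span, Set.image2_singleton, Submodule.map₂_span_span,
      Set.image2_singleton, Submodule.map₂_span_span, Set.image2_singleton,
      Submodule.map₂_span_span, Set.image2_singleton] at h1
    constructor
    · have : star (star u v) w ∈ Submodule.span K {star u (star v w)} := by
        rw [← h1]; exact Submodule.mem_span_singleton_self _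
      obtain ⟨α, hα⟩ := Submodule.mem_span_singleton.mp this
      exact ⟨α, hα.symm⟩
    · have : star u (star v w) ∈ Submodule.span K {star (star u v) w} := by
        rw [h1]; exact Submodule.mem_span_singleton_self _
      obtain ⟨β, hβ⟩ := Submodule.mem_span_singleton.mp this
      exact ⟨β, hβ.symm⟩
  · intro h U W Z
    apply le_antisymm
    · rw [Submodule.map₂_le]
      intro m hm z hz
      have hsub : Submodule.map₂ star U W ≤
          Submodule.comap (star.flip z) (Submodule.map₂ star U (Submodule.map₂ star W Z)) := by
        rw [Submodule.map₂_le]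
        intro u hu w hw
        simp only [Submodule.mem_comap, LinearMap.flip_apply]
        obtain ⟨α, hα⟩ := (h u w z).1
        rw [hα]
        exact Submodule.smul_mem _ _
          (Submodule.apply_mem_map₂ _ hu (Submodule.apply_mem_map₂ _ hw hz))
      exact hsub hm
    · rw [Submodule.map₂_le]
      intro u hu m hm
      have hsub : Submodule.map₂ star W Z ≤
          Submodule.comap (star u) (Submodule.map₂ star (Submodule.map₂ star U W) Z) := by
        rw [Submodule.map₂_le]
        intro w hw z hz
        simp only [Submodule.mem_comap]
        obtain ⟨β, hβ⟩ := (h u w z).2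
        rw [hβ]
        exact Submodule.smul_mem _ _
          (Submodule.apply_mem_map₂ _ (Submodule.apply_mem_map₂ _ hu hw) hz)
      exact hsub hm
end

section
/- Let (V, ⋆) be a K-algebra. Every subspace U satisfies U ⊆ U ⊗ U (contractivity of the fusion on subspaces) if and only if V is pseudo-contractive: for every u ∈ V there exists α ∈ K with u = α • (u ⋆ u). -/
/-- fusion is contractive iff the K-algebra is pseudo-contractive. -/
theorem fusion_contractive_iff_pseudoContractive {K V : Type*} [Field K] [AddCommGroup V] [Module K V]
    (star : V →ₗ[K] V →ₗ[K] V) :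
    (∀ U : Submodule K V,
        U ≤ Submodule.span K (Set.image2 (fun u w => star u w) (U : Set V) (U : Set V))) ↔
      (∀ u : V, ∃ α : K, u = α • (star u u)) := by
  constructor
  · intro h u
    have hu : u ∈ Submodule.span K (Set.image2 (fun a b => star a b)
        ((Submodule.span K {u} : Submodule K V) : Set V)
        ((Submodule.span K {u} : Submodule K V) : Set V)) :=
      h (Submodule.span K {u}) (Submodule.mem_span_singleton_self u)
    have hsub : Set.image2 (fun a b => star a b)
        ((Submodule.span K {u} : Submodule K V) : Set V)
        ((Submodule.span K {u} : Submodule K V) : Set V)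
        ⊆ (Submodule.span K {star u u} : Submodule K V) := by
      rintro x ⟨a, ha, b, hb, rfl⟩
      simp only [SetLike.mem_coe, Submodule.mem_span_singleton] at ha hb
      obtain ⟨c, rfl⟩ := ha
      obtain ⟨d, rfl⟩ := hb
      refine SetLike.mem_coe.mpr (Submodule.mem_span_singleton.mpr ⟨c * d, ?_⟩)
      simp [mul_smul, smul_comm d c]
    have := Submodule.span_le.mpr hsub hu
    obtain ⟨α, hα⟩ := Submodule.mem_span_singleton.mp this
    exact ⟨α, hα.symm⟩
  · intro h U u hu
    obtain ⟨α, hα⟩ := h u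
    rw [hα]
    exact Submodule.smul_mem _ _ (Submodule.subset_span ⟨u, hu, u, hu, rfl⟩)
end

section
/- Let (V, ⋆) be a K-algebra. Every subspace U satisfies U ⊗ U ⊆ U (expansivity of the fusion on subspaces) if and only if V is pseudo-expansive: for all u, v ∈ V there exist α, β ∈ K with u ⋆ v = α • u + β • v. -/
/-- fusion is expansive iff the K-algebra is pseudo-expansive. -/
theorem fusion_expansive_iff_pseudoExpansive {K V : Type*} [Field K] [AddCommGroup V] [Module K V]
    (star : V →ₗ[K] V →ₗ[K] V) :
    (∀ U : Submodule K V,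
        Submodule.span K (Set.image2 (fun u w => star u w) (U : Set V) (U : Set V)) ≤ U) ↔
      (∀ u v : V, ∃ α β : K, star u v = α • u + β • v) := by
  constructor
  · intro h u v
    have hu : u ∈ Submodule.span K ({u, v} : Set V) :=
      Submodule.subset_span (by simp)
    have hv : v ∈ Submodule.span K ({u, v} : Set V) :=
      Submodule.subset_span (by simp)
    have := h (Submodule.span K ({u, v} : Set V))
      (Submodule.subset_span (Set.mem_image2_of_mem hu hv))
    rw [Submodule.mem_span_pair] at this
    obtain ⟨α, β, hab⟩ := this
    exact ⟨α, β, hab.symm⟩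
  · intro h U
    rw [Submodule.span_le]
    rintro x ⟨u, hu, v, hv, rfl⟩
    obtain ⟨α, β, hab⟩ := h u v
    show (star u) v ∈ U
    rw [hab]
    exact U.add_mem (U.smul_mem _ hu) (U.smul_mem _ hv)
end

section
/- Let V be a vector space over K and R ⊆ V × V a relation satisfying: (L2R) whenever t R (α•u + β•v) there exist scalars λ, μ and vectors z, w with z R u, w R v, and λ•z + μ•w = t; and (L3R) x R 0 iff x = 0. Define ◇X := {v | ∃ u ∈ X, v R u} for X ⊆ V. Then span is a ◇-nucleus: ◇(span X) ⊆ span(◇X) for every X ⊆ V. -/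
/-- span is a ◇-nucleus for a relation satisfying (L2R) and (L3R). -/
theorem span_diamond_nucleus {K V : Type*} [Field K] [AddCommGroup V] [Module K V]
    (R : V → V → Prop)
    (L2R : ∀ (t u v : V) (α β : K), R t (α • u + β • v) →
      ∃ (l m : K) (z w : V), R z u ∧ R w v ∧ l • z + m • w = t)
    (L3R : ∀ x : V, R x 0 ↔ x = 0) :
    ∀ X : Set V,
      {v : V | ∃ u ∈ Submodule.span K X, R v u} ⊆
        (Submodule.span K {v : V | ∃ u ∈ X, R v u} : Set V) := by
  intro X v hv
  obtain ⟨u, hu, hR⟩ := hv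
  induction hu using Submodule.span_induction generalizing v with
  | mem x hx => exact Submodule.subset_span ⟨x, hx, hR⟩
  | zero =>
    rw [(L3R v).mp hR]
    exact Submodule.zero_mem _
  | add x y hx hy ihx ihy =>
    have : R v ((1 : K) • x + (1 : K) • y) := by simpa using hR
    obtain ⟨l, m, z, w, hz, hw, hvw⟩ := L2R v x y 1 1 this
    rw [← hvw]
    exact Submodule.add_mem _ (Submodule.smul_mem _ _ (ihx hz))
      (Submodule.smul_mem _ _ (ihy hw))
  | smul a x hx ih =>
    have : R v (a • x + (0 : K) • (0 : V)) := by simpa using hR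
    obtain ⟨l, m, z, w, hz, hw, hvw⟩ := L2R v x 0 a 0 this
    rw [← hvw, (L3R w).mp hw]
    simpa using Submodule.smul_mem _ l (ih hz)
end

section
/- Let (V, ⋆, R) be a modal K-algebra (⋆ bilinear, R a linear relation satisfying L1R–L3R). The right-associativity inequality (U ⊗ W) ⊗ ◇Z ⊆ U ⊗ (W ⊗ ◇Z) holds for all subspaces U, W, Z if and only if V is pseudo right-associative: for all u, w, z, v ∈ V with v R z, there exist α, β ∈ K and v' ∈ V such that v' R (β • z) and (u ⋆ w) ⋆ v = α • (u ⋆ (w ⋆ v')). -/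
/-- right-associativity of fusion w.r.t. ◇ on subspaces iff
pseudo right-associativity of the modal K-algebra. -/
theorem rightAssoc_iff_pseudoRightAssoc {K V : Type*} [Field K] [AddCommGroup V] [Module K V]
    (star : V →ₗ[K] V →ₗ[K] V) (R : V → V → Prop)
    (L1R : ∀ (v u z w : V), R v u → R z w → ∀ γ δ : K,
      ∃ α β : K, R (γ • v + δ • z) (α • u + β • w))
    (L2R : ∀ (t u v : V) (α β : K), R t (α • u + β • v) →
      ∃ (l m : K) (z w : V), R z u ∧ R w v ∧ l • z + m • w = t)
    (L3R : ∀ x : V, R x 0 ↔ x = 0) :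
    (∀ U W Z : Submodule K V,
        Submodule.span K (Set.image2 (fun a b => star a b)
          ((Submodule.span K (Set.image2 (fun a b => star a b) (U : Set V) (W : Set V))) : Set V)
          ((Submodule.span K {v : V | ∃ z ∈ Z, R v z}) : Set V)) ≤
        Submodule.span K (Set.image2 (fun a b => star a b) (U : Set V)
          ((Submodule.span K (Set.image2 (fun a b => star a b) (W : Set V)
            ((Submodule.span K {v : V | ∃ z ∈ Z, R v z}) : Set V))) : Set V))) ↔
      (∀ u w z v : V, R v z → ∃ (α β : K) (v' : V),
        R v' (β • z) ∧ star (star u w) v = α • (star u (star w v'))) := by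
  constructor
  · intro h u w z v hRvz
    have hR00 : R 0 0 := (L3R 0).mpr rfl
    set U := Submodule.span K {u} with hU
    set W := Submodule.span K {w} with hW
    set Z := Submodule.span K {z} with hZ
    -- the set of v' related to a multiple of z is a submodule
    have hS0 : ∃ β : K, R (0 : V) (β • z) := ⟨0, by simpa using hR00⟩
    have hSadd : ∀ x : V, (∃ β : K, R x (β • z)) → ∀ y : V, (∃ β : K, R y (β • z)) →
        ∀ γ δ : K, ∃ β : K, R (γ • x + δ • y) (β • z) := by
      rintro x ⟨β₁, hx⟩ y ⟨β₂, hy⟩ γ δ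
      obtain ⟨a, b, hab⟩ := L1R x (β₁ • z) y (β₂ • z) hx hy γ δ
      exact ⟨a * β₁ + b * β₂, by simpa [add_smul, mul_smul] using hab⟩
    let Dsub : Submodule K V :=
      { carrier := {v' : V | ∃ β : K, R v' (β • z)}
        zero_mem' := hS0
        add_mem' := fun {x y} hx hy => by simpa using hSadd x hx y hy 1 1
        smul_mem' := fun c x hx => by simpa using hSadd x hx 0 hS0 c 0 }
    have hu : u ∈ U := Submodule.mem_span_singleton_self u
    have hw : w ∈ W := Submodule.mem_span_singleton_self w
    have hz : z ∈ Z := Submodule.mem_span_singleton_self z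
    have hmem : star (star u w) v ∈
        Submodule.span K (Set.image2 (fun a b => star a b)
          ((Submodule.span K (Set.image2 (fun a b => star a b) (U : Set V) (W : Set V))) : Set V)
          ((Submodule.span K {v : V | ∃ z ∈ Z, R v z}) : Set V)) := by
      apply Submodule.subset_span
      exact ⟨star u w, Submodule.subset_span ⟨u, hu, w, hw, rfl⟩,
        v, Submodule.subset_span ⟨z, hz, hRvz⟩, rfl⟩
    have hx := h U W Z hmem
    have hD_le : Submodule.span K {v : V | ∃ z ∈ Z, R v z} ≤ Dsub := by
      rw [Submodule.span_le]
      rintro v'' ⟨z', hz', hR⟩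
      obtain ⟨c, rfl⟩ := Submodule.mem_span_singleton.mp hz'
      exact ⟨c, hR⟩
    have hT_le : Submodule.span K (Set.image2 (fun a b => star a b) (W : Set V)
          ((Submodule.span K {v : V | ∃ z ∈ Z, R v z}) : Set V)) ≤
        Submodule.map (star w) Dsub := by
      rw [Submodule.span_le]
      rintro _ ⟨a, ha, b, hb, rfl⟩
      obtain ⟨c, rfl⟩ := Submodule.mem_span_singleton.mp ha
      exact ⟨c • b, Dsub.smul_mem c (hD_le hb), by simp⟩
    have hRHS_le : Submodule.span K (Set.image2 (fun a b => star a b) (U : Set V)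
          ((Submodule.span K (Set.image2 (fun a b => star a b) (W : Set V)
            ((Submodule.span K {v : V | ∃ z ∈ Z, R v z}) : Set V))) : Set V)) ≤
        Submodule.map (star u) (Submodule.map (star w) Dsub) := by
      rw [Submodule.span_le]
      rintro _ ⟨a, ha, b, hb, rfl⟩
      obtain ⟨c, rfl⟩ := Submodule.mem_span_singleton.mp ha
      obtain ⟨d, hd, rfl⟩ := hT_le hb
      exact ⟨star w (c • d), ⟨c • d, Dsub.smul_mem c hd, rfl⟩, by simp⟩
    obtain ⟨_, ⟨d, hd, rfl⟩, heq⟩ := hRHS_le hx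
    obtain ⟨β, hβ⟩ := hd
    exact ⟨1, β, d, hβ, by rw [one_smul, heq]⟩
  · intro h U W Z
    rw [Submodule.span_le]
    rintro _ ⟨a, ha, b, hb, rfl⟩
    induction ha using Submodule.span_induction with
    | mem x hx =>
      obtain ⟨u', hu', w', hw', rfl⟩ := hx
      induction hb using Submodule.span_induction with
      | mem y hy =>
        obtain ⟨z', hz', hR⟩ := hy
        obtain ⟨α, β, v', hR', heq⟩ := h u' w' z' y hR
        show (star (star u' w')) y ∈ _
        rw [heq]
        apply Submodule.smul_mem
        apply Submodule.subset_span
        exact ⟨u', hu', star w' v',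
          Submodule.subset_span ⟨w', hw', v',
            Submodule.subset_span ⟨β • z', Z.smul_mem β hz', hR'⟩, rfl⟩, rfl⟩
      | zero => simp
      | add x y hx hy px py =>
        show (star (star u' w')) (x + y) ∈ _
        rw [map_add]; exact Submodule.add_mem _ px py
      | smul c x hx px =>
        show (star (star u' w')) (c • x) ∈ _
        rw [map_smul]; exact Submodule.smul_mem _ c px
    | zero => simp
    | add x y hx hy px py =>
      show (star (x + y)) b ∈ _
      rw [map_add, LinearMap.add_apply]; exact Submodule.add_mem _ px py
    | smul c x hx px =>
      show (star (c • x)) b ∈ _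
      rw [map_smul, LinearMap.smul_apply]; exact Submodule.smul_mem _ c px
end

section
/- Let (V, ⋆, R) be a modal K-algebra. The left-commutativity inequality (U ⊗ W) ⊗ ◇Z ⊆ (U ⊗ ◇Z) ⊗ W holds for all subspaces U, W, Z if and only if V is pseudo left-commutative: for all u, w, z, v ∈ V with v R z, there exist α, β ∈ K and v' ∈ V such that v' R (β • z) and (u ⋆ w) ⋆ v = α • ((u ⋆ v') ⋆ w). -/
/-- left-commutativity of fusion w.r.t. ◇ on subspaces iff
pseudo left-commutativity of the modal K-algebra. -/
theorem leftComm_iff_pseudoLeftComm {K V : Type*} [Field K] [AddCommGroup V] [Module K V]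
    (star : V →ₗ[K] V →ₗ[K] V) (R : V → V → Prop)
    (L1R : ∀ (v u z w : V), R v u → R z w → ∀ γ δ : K,
      ∃ α β : K, R (γ • v + δ • z) (α • u + β • w))
    (L2R : ∀ (t u v : V) (α β : K), R t (α • u + β • v) →
      ∃ (l m : K) (z w : V), R z u ∧ R w v ∧ l • z + m • w = t)
    (L3R : ∀ x : V, R x 0 ↔ x = 0) :
    (∀ U W Z : Submodule K V,
        Submodule.span K (Set.image2 (fun a b => star a b)
          ((Submodule.span K (Set.image2 (fun a b => star a b) (U : Set V) (W : Set V))) : Set V)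
          ((Submodule.span K {v : V | ∃ z ∈ Z, R v z}) : Set V)) ≤
        Submodule.span K (Set.image2 (fun a b => star a b)
          ((Submodule.span K (Set.image2 (fun a b => star a b) (U : Set V)
            ((Submodule.span K {v : V | ∃ z ∈ Z, R v z}) : Set V))) : Set V)
          (W : Set V))) ↔
      (∀ u w z v : V, R v z → ∃ (α β : K) (v' : V),
        R v' (β • z) ∧ star (star u w) v = α • (star (star u v') w)) := by
  classical
  -- the diamond of a submodule is a submodule
  have diaSub : ∀ Z : Submodule K V, ∃ D : Submodule K V,
      (D : Set V) = {v : V | ∃ z ∈ Z, R v z} := by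
    intro Z
    refine ⟨{ carrier := {v : V | ∃ z ∈ Z, R v z}
              zero_mem' := ⟨0, Z.zero_mem, (L3R 0).mpr rfl⟩
              add_mem' := ?_
              smul_mem' := ?_ }, rfl⟩
    · rintro a b ⟨za, hza, hRa⟩ ⟨zb, hzb, hRb⟩
      obtain ⟨α, β, h⟩ := L1R a za b zb hRa hRb 1 1
      exact ⟨α • za + β • zb, Z.add_mem (Z.smul_mem _ hza) (Z.smul_mem _ hzb),
        by simpa using h⟩
    · rintro c a ⟨za, hza, hRa⟩
      obtain ⟨α, β, h⟩ := L1R a za a za hRa hRa c 0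
      exact ⟨α • za + β • za, Z.add_mem (Z.smul_mem _ hza) (Z.smul_mem _ hza),
        by simpa using h⟩
  constructor
  · intro H u w z v hvz
    obtain ⟨D, hD⟩ := diaSub (Submodule.span K {z})
    have hspan : Submodule.span K {v : V | ∃ z' ∈ Submodule.span K {z}, R v z'} = D := by
      rw [← hD, Submodule.span_eq]
    have h1 := H (Submodule.span K {u}) (Submodule.span K {w}) (Submodule.span K {z})
    rw [← Submodule.map₂_eq_span_image2, ← Submodule.map₂_eq_span_image2,
      ← Submodule.map₂_eq_span_image2, ← Submodule.map₂_eq_span_image2, hspan] at h1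
    have hmem : star (star u w) v ∈
        Submodule.map₂ star (Submodule.map₂ star (Submodule.span K {u}) (Submodule.span K {w})) D := by
      refine Submodule.apply_mem_map₂ _ ?_ ?_
      · exact Submodule.apply_mem_map₂ _ (Submodule.mem_span_singleton_self u)
          (Submodule.mem_span_singleton_self w)
      · rw [← SetLike.mem_coe, hD]
        exact ⟨z, Submodule.mem_span_singleton_self z, hvz⟩
    have h2 := h1 hmem
    rw [Submodule.map₂_span_singleton_eq_map, Submodule.map₂_span_singleton_eq_map_flip] at h2
    obtain ⟨a, ⟨d, hd, rfl⟩, hde⟩ := h2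
    rw [hD] at hd
    obtain ⟨z', hz', hRd⟩ := hd
    obtain ⟨c, rfl⟩ := Submodule.mem_span_singleton.mp hz'
    exact ⟨1, c, d, hRd, by simpa using hde.symm⟩
  · intro H U W Z
    obtain ⟨D, hD⟩ := diaSub Z
    have hspan : Submodule.span K {v : V | ∃ z ∈ Z, R v z} = D := by
      rw [← hD, Submodule.span_eq]
    rw [← Submodule.map₂_eq_span_image2, ← Submodule.map₂_eq_span_image2,
      ← Submodule.map₂_eq_span_image2, ← Submodule.map₂_eq_span_image2, hspan]
    refine Submodule.map₂_le.mpr ?_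
    intro a ha b hb
    rw [← SetLike.mem_coe, hD] at hb
    obtain ⟨z, hz, hRb⟩ := hb
    rw [Submodule.map₂_eq_span_image2] at ha
    induction ha using Submodule.span_induction with
    | mem x hx =>
      obtain ⟨u, hu, w, hw, rfl⟩ := hx
      obtain ⟨α, β, v', hv', heq⟩ := H u w z b hRb
      rw [heq]
      refine Submodule.smul_mem _ _ ?_
      refine Submodule.apply_mem_map₂ _ ?_ hw
      refine Submodule.apply_mem_map₂ _ hu ?_
      rw [← SetLike.mem_coe, hD]
      exact ⟨β • z, Z.smul_mem _ hz, hv'⟩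
    | zero => simp only [map_zero, LinearMap.zero_apply]; exact (Submodule.map₂ star (Submodule.map₂ star U D) W).zero_mem
    | add x y _ _ hx hy => rw [map_add, LinearMap.add_apply]; exact Submodule.add_mem _ hx hy
    | smul c x _ hx => rw [map_smul, LinearMap.smul_apply]; exact Submodule.smul_mem _ _ hx
end

section
/- Let P be a finite residuated poset with n elements (a partial order with operations ⊗, \, / satisfying x ⊗ y ≤ z iff x ≤ z / y iff y ≤ x \ z). Then there is an n²-dimensional vector space V over 𝔽₂ equipped with a bilinear product ⋆, and a map h from P into the lattice of subspaces of V, such that h is an order embedding (p ≤ q iff h(p) ⊆ h(q)) and h(p ⊗ q) = h(p) ⊗ h(q), where on subspaces U ⊗ W := span{u ⋆ w | u ∈ U, w ∈ W}. -/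
/-- every finite residuated poset embeds into the lattice of subspaces of the
`n²`-dimensional vector space over `𝔽₂`, preserving order and fusion. -/
theorem finite_residuated_poset_embedding
    {P : Type*} [Fintype P] [PartialOrder P]
    (mul ldiv rdiv : P → P → P)
    (resid : ∀ x y z : P, (mul x y ≤ z ↔ x ≤ rdiv z y) ∧ (mul x y ≤ z ↔ y ≤ ldiv x z)) :
    ∃ (star : (Fin (Fintype.card P) × Fin (Fintype.card P) → ZMod 2) →ₗ[ZMod 2]
        (Fin (Fintype.card P) × Fin (Fintype.card P) → ZMod 2) →ₗ[ZMod 2]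
        (Fin (Fintype.card P) × Fin (Fintype.card P) → ZMod 2))
      (h : P → Submodule (ZMod 2) (Fin (Fintype.card P) × Fin (Fintype.card P) → ZMod 2)),
      (∀ p q : P, p ≤ q ↔ h p ≤ h q) ∧
      (∀ p q : P, h (mul p q) =
        Submodule.span (ZMod 2)
          (Set.image2 (fun u w => star u w)
            ((h p : Set (Fin (Fintype.card P) × Fin (Fintype.card P) → ZMod 2)))
            ((h q : Set (Fin (Fintype.card P) × Fin (Fintype.card P) → ZMod 2))))) := by
  classical
  set n := Fintype.card P
  set e : P ≃ Fin n := (Fintype.equivFin P)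
  -- monotonicity of mul
  have mono : ∀ {a p b q : P}, a ≤ p → b ≤ q → mul a b ≤ mul p q := by
    intro a p b q hap hbq
    have h1 : p ≤ rdiv (mul p q) q := (resid p q (mul p q)).1.mp le_rfl
    have h2 : mul a q ≤ mul p q := (resid a q (mul p q)).1.mpr (hap.trans h1)
    have h3 : q ≤ ldiv a (mul p q) := (resid a q (mul p q)).2.mp h2
    exact (resid a b (mul p q)).2.mpr (hbq.trans h3)
  -- combinatorial map on indices
  set F : (Fin n × Fin n) → (Fin n × Fin n) → (Fin n × Fin n) := fun i j =>
    if e.symm i.2 ≤ mul (e.symm i.1) (e.symm j.1) then (i.2, j.2)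
    else (e (mul (e.symm i.1) (e.symm j.1)), j.2) with hF
  set star : (Fin n × Fin n → ZMod 2) →ₗ[ZMod 2] (Fin n × Fin n → ZMod 2) →ₗ[ZMod 2]
      (Fin n × Fin n → ZMod 2) :=
    LinearMap.mk₂ (ZMod 2)
      (fun u w => ∑ i : Fin n × Fin n, ∑ j : Fin n × Fin n,
        (u i * w j) • Pi.single (F i j) (1 : ZMod 2))
      (by intro u u' w; simp [add_mul, add_smul, Finset.sum_add_distrib])
      (by intro c u w; simp [mul_assoc, Finset.smul_sum, smul_smul])
      (by intro u w w'; simp [mul_add, add_smul, Finset.sum_add_distrib])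
      (by intro c u w; simp [Finset.smul_sum, smul_smul, mul_left_comm]) with hstar
  have star_single : ∀ i j : Fin n × Fin n,
      star (Pi.single i 1) (Pi.single j 1) = Pi.single (F i j) 1 := by
    intro i j
    simp only [hstar, LinearMap.mk₂_apply]
    rw [Finset.sum_eq_single i, Finset.sum_eq_single j]
    · simp
    · intro b _ hb; simp [Pi.single_apply, hb]
    · simp
    · intro b _ hb
      rw [Finset.sum_eq_zero]
      intro c _
      simp [Pi.single_apply, hb]
    · simp
  -- generating sets
  set B : P → Set (Fin n × Fin n → ZMod 2) := fun p =>
    {v | ∃ k : Fin n × Fin n, e.symm k.1 ≤ p ∧ v = Pi.single k 1} with hB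
  set h : P → Submodule (ZMod 2) (Fin n × Fin n → ZMod 2) :=
    fun p => Submodule.span (ZMod 2) (B p) with hh
  refine ⟨star, h, ?_, ?_⟩
  · intro p q
    constructor
    · intro hpq
      exact Submodule.span_mono (fun v ⟨k, hk, hv⟩ => ⟨k, hk.trans hpq, hv⟩)
    · intro hle
      have hmem : Pi.single ((e p, e p) : Fin n × Fin n) (1 : ZMod 2) ∈ h p :=
        Submodule.subset_span ⟨(e p, e p), by simp, rfl⟩
      have hmem' := hle hmem
      -- every element of h q vanishes at coordinates k with ¬ e.symm k.1 ≤ q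
      have hvan : ∀ v ∈ h q, ∀ k : Fin n × Fin n, ¬ e.symm k.1 ≤ q → v k = 0 := by
        intro v hv
        induction hv using Submodule.span_induction with
        | mem v hv =>
          obtain ⟨k', hk', rfl⟩ := hv
          intro k hk
          have : k' ≠ k := fun hkk => hk (hkk ▸ hk')
          simp [Pi.single_apply, this]
        | zero => intro k _; rfl
        | add v w _ _ hv hw => intro k hk; simp [hv k hk, hw k hk]
        | smul c v _ hv => intro k hk; simp [hv k hk]
      by_contra hpq
      have := hvan _ hmem' (e p, e p) (by simpa using hpq)
      simp at this
  · intro p q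
    have : Submodule.span (ZMod 2) (Set.image2 (fun u w => star u w)
        ((h p : Set (Fin n × Fin n → ZMod 2))) ((h q : Set (Fin n × Fin n → ZMod 2))))
        = Submodule.map₂ star (h p) (h q) := (Submodule.map₂_eq_span_image2 star (h p) (h q)).symm
    rw [this, hh, Submodule.map₂_span_span]
    have hset : Set.image2 (fun m n_1 => star m n_1) (B p) (B q) = B (mul p q) := by
      ext v
      constructor
      · rintro ⟨u, ⟨i, hi, rfl⟩, w, ⟨j, hj, rfl⟩, rfl⟩
        refine ⟨F i j, ?_, by exact star_single i j⟩
        simp only [hF]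
        split
        · next hc => simpa using le_trans hc (mono hi hj)
        · next hc => simpa using mono hi hj
      · rintro ⟨k, hk, rfl⟩
        refine ⟨Pi.single ((e p, k.1) : Fin n × Fin n) 1, ⟨(e p, k.1), by simp, rfl⟩,
          Pi.single ((e q, k.2) : Fin n × Fin n) 1, ⟨(e q, k.2), by simp, rfl⟩, ?_⟩
        show star _ _ = _
        rw [star_single]
        simp only [hF]
        rw [if_pos (by simpa using hk)]
    rw [hset]
end
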